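/- In the graph G' obtained by replacing each edge e = (x,λ,y) of G by the fresh path ψ(e), every path from a vertex s ∈ V to a vertex t ∈ V whose internal visits to V decompose it into minimal segments between V-vertices is a concatenation of paths ψ(e₁)·...·ψ(e_k) for edges e₁,...,e_k forming a path from s to t in G, provided that each minimal segment between consecutive V-vertices that starts at some x and only uses the fresh vertices of a single edge e must traverse ψ(e) (i.e., fresh paths are simple and the fresh vertices of distinct edges are disjoint, and each fresh path can only be traversed from its source to its sink). Consequently, there is a path from s to t in G' with label a Dyck word if and only if there is a path from s to t in G whose label w satisfies: φ(w) is a Dyck word, where the directedness of G' forces every G'-path between V-vertices to be of the form ψ(π). -/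

import Mathlib

/-- Paths in a labeled graph, recording the label word. -/
inductive PathLabel {V Λ : Type*} (E : V → Λ → V → Prop) : V → V → List Λ → Prop
  | nil (v : V) : PathLabel E v v []
  | cons {u v w : V} {l : Λ} {ls : List Λ} :
      E u l v → PathLabel E v w ls → PathLabel E u w (l :: ls)

/-- Two-letter Dyck language over `Fin 2 × Bool`, where `(0,false)` = a,
`(0,true)` = ā, `(1,false)` = b, `(1,true)` = b̄. -/
inductive Dyck : List (Fin 2 × Bool) → Prop
  | nil : Dyck []
  | cons (i : Fin 2) {u v : List (Fin 2 × Bool)} :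
      Dyck u → Dyck v → Dyck ((i, false) :: u ++ (i, true) :: v)

/-- The `i`-th node on the fresh path replacing the edge `e = (x, λ, y)`,
where `m` is the length of `φ λ`. -/
def node {V Λ : Type*} (e : V × Λ × V) (m i : ℕ) :
    V ⊕ ((V × Λ × V) × ℕ) :=
  if i = 0 then Sum.inl e.1 else if i = m then Sum.inl e.2.2 else Sum.inr (e, i)

/-- The edge relation of the graph `G'` obtained by replacing each edge
`e = (x, λ, y)` by a fresh directed simple path from `x` to `y` labeled `φ λ`,
with fresh internal vertices specific to `e`. -/
def ReplEdge {V Λ Λ' : Type*} (E : V → Λ → V → Prop) (φ : Λ → List Λ') :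
    (V ⊕ ((V × Λ × V) × ℕ)) → Λ' → (V ⊕ ((V × Λ × V) × ℕ)) → Prop :=
  fun u l v => ∃ e : V × Λ × V, E e.1 e.2.1 e.2.2 ∧ ∃ i : ℕ,
    (φ e.2.1)[i]? = some l ∧
      u = node e (φ e.2.1).length i ∧ v = node e (φ e.2.1).length (i + 1)

section Aux

variable {V Λ : Type*} {E : V → Λ → V → Prop} {φ : Λ → List (Fin 2 × Bool)}

lemma pathLabel_append {V' Λ' : Type*} {E' : V' → Λ' → V' → Prop} {u v x : V'}
    {w1 w2 : List Λ'} (h1 : PathLabel E' u v w1) (h2 : PathLabel E' v x w2) :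
    PathLabel E' u x (w1 ++ w2) := by
  induction h1 with
  | nil => simpa
  | cons he _ ih => exact PathLabel.cons he (ih h2)

lemma edge_to_path {e : V × Λ × V} (he : E e.1 e.2.1 e.2.2)
    (hpos : 0 < (φ e.2.1).length) :
    ∀ n i, (φ e.2.1).length - i = n → i ≤ (φ e.2.1).length →
      PathLabel (ReplEdge E φ) (node e (φ e.2.1).length i) (Sum.inl e.2.2)
        ((φ e.2.1).drop i) := by
  intro n
  induction n with
  | zero =>
    intro i h hle
    have hi : i = (φ e.2.1).length := by omega
    subst hi
    rw [List.drop_length]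
    have hm : (φ e.2.1).length ≠ 0 := by omega
    have : node e (φ e.2.1).length (φ e.2.1).length = Sum.inl e.2.2 := by
      simp [node, hm]
    rw [this]
    exact PathLabel.nil _
  | succ n ih =>
    intro i h hle
    have hi : i < (φ e.2.1).length := by omega
    rw [List.drop_eq_getElem_cons hi]
    exact PathLabel.cons ⟨e, he, i, List.getElem?_eq_getElem hi, rfl, rfl⟩
      (ih (i + 1) (by omega) (by omega))

lemma seg {u z : V ⊕ ((V × Λ × V) × ℕ)} {w' : List (Fin 2 × Bool)}
    (h : PathLabel (ReplEdge E φ) u z w') (ht : ∃ t : V, z = Sum.inl t) :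
    ∀ e : V × Λ × V, ∀ i : ℕ, 0 < i → i ≤ (φ e.2.1).length →
      u = node e (φ e.2.1).length i →
      ∃ w'', w' = (φ e.2.1).drop i ++ w'' ∧
        PathLabel (ReplEdge E φ) (Sum.inl e.2.2) z w'' := by
  induction h with
  | nil v =>
    rintro e i h0 him hu
    rcases Nat.lt_or_ge i (φ e.2.1).length with hlt | hge
    · obtain ⟨t, rfl⟩ := ht
      rw [node, if_neg (by omega), if_neg (by omega)] at hu
      exact absurd hu (by simp)
    · have hi : i = (φ e.2.1).length := by omega
      subst hi
      refine ⟨[], by simp, ?_⟩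
      rw [node, if_neg (by omega), if_pos rfl] at hu
      rw [← hu]
      exact PathLabel.nil _
  | @cons u v z l ls hedge hrest ih =>
    rintro e i h0 him hu
    rcases Nat.lt_or_ge i (φ e.2.1).length with hlt | hge
    · -- u is an internal node; the step is forced along ψ(e)
      rw [node, if_neg (by omega), if_neg (by omega)] at hu
      obtain ⟨e', he', i', hget, hu', hv'⟩ := hedge
      rw [hu] at hu'
      -- node e' m' i' = inr (e, i) forces e' = e, i' = i
      have hi'm : i' < (φ e'.2.1).length := by
        by_contra hge'
        rw [List.getElem?_eq_none (by omega)] at hget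
        cases hget
      have hi'0 : i' ≠ 0 := by
        rintro rfl
        rw [node, if_pos rfl] at hu'
        exact absurd hu' (by simp)
      rw [node, if_neg hi'0, if_neg (by omega)] at hu'
      obtain ⟨rfl, rfl⟩ : e = e' ∧ i = i' := by
        have h3 := Sum.inr.inj hu'
        exact ⟨congrArg Prod.fst h3, congrArg Prod.snd h3⟩
      have hget' : l = (φ e.2.1)[i] := by
        rw [List.getElem?_eq_getElem hlt] at hget
        exact (Option.some.inj hget).symm
      obtain ⟨w'', hw'', hp⟩ := ih ht e (i + 1) (by omega) (by omega) hv'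
      refine ⟨w'', ?_, hp⟩
      rw [hw'', hget', List.drop_eq_getElem_cons hlt, List.cons_append]
    · -- i = m : u = inl e.2.2, the whole remaining path works
      have hi : i = (φ e.2.1).length := by omega
      subst hi
      rw [node, if_neg (by omega), if_pos rfl] at hu
      refine ⟨l :: ls, by simp, ?_⟩
      rw [← hu]
      exact PathLabel.cons hedge hrest

lemma forward (hφ : ∀ l, φ l ≠ []) :
    ∀ n : ℕ, ∀ w' : List (Fin 2 × Bool), ∀ s t : V, w'.length ≤ n →
      PathLabel (ReplEdge E φ) (Sum.inl s) (Sum.inl t) w' →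
      ∃ w, PathLabel E s t w ∧ w' = (w.map φ).flatten := by
  intro n
  induction n with
  | zero =>
    intro w' s t hlen h
    cases h with
    | nil => exact ⟨[], PathLabel.nil _, rfl⟩
    | cons he hrest => simp at hlen
  | succ n ih =>
    intro w' s t hlen h
    cases h with
    | nil => exact ⟨[], PathLabel.nil _, rfl⟩
    | @cons _ v _ l ls hedge hrest =>
      obtain ⟨e, he, i, hget, hu, hv⟩ := hedge
      have hlt : i < (φ e.2.1).length := by
        by_contra hge
        rw [List.getElem?_eq_none (by omega)] at hget
        cases hget
      have hi0 : i = 0 := by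
        by_contra hne
        rw [node, if_neg hne, if_neg (by omega)] at hu
        exact absurd hu (by simp)
      subst hi0
      rw [node, if_pos rfl] at hu
      have hs : e.1 = s := (Sum.inl.inj hu).symm
      have hl : l = (φ e.2.1)[0] := by
        rw [List.getElem?_eq_getElem hlt] at hget
        exact (Option.some.inj hget).symm
      obtain ⟨w'', hls, hp⟩ := seg hrest ⟨t, rfl⟩ e 1 one_pos (by omega) (by simpa using hv)
      have hlen'' : w''.length ≤ n := by
        have h1 : ls.length = ((φ e.2.1).drop 1).length + w''.length := by
          rw [hls]; simp
        simp only [List.length_cons] at hlen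
        omega
      obtain ⟨w, hpw, hww⟩ := ih w'' e.2.2 t hlen'' hp
      refine ⟨e.2.1 :: w, PathLabel.cons (hs ▸ he) hpw, ?_⟩
      have hphi : φ e.2.1 = l :: (φ e.2.1).drop 1 := by
        rw [hl, ← List.drop_eq_getElem_cons hlt, List.drop_zero]
      rw [List.map_cons, List.flatten_cons, ← hww, hls, hphi]
      rfl

lemma backward (hφ : ∀ l, φ l ≠ []) {s t : V} {w : List Λ}
    (h : PathLabel E s t w) :
    PathLabel (ReplEdge E φ) (Sum.inl s) (Sum.inl t) ((w.map φ).flatten) := by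
  induction h with
  | nil v => exact PathLabel.nil _
  | @cons u v x l ls he _ ih =>
    have hpos : 0 < (φ l).length := List.length_pos_iff.mpr (hφ l)
    have h1 := edge_to_path (e := (u, l, v)) (φ := φ) he hpos (φ l).length 0 rfl
      (by omega)
    rw [List.drop_zero, node, if_pos rfl] at h1
    simpa using pathLabel_append h1 ih

end Aux

theorem replacement_dyck_reachability {V Λ : Type*} (E : V → Λ → V → Prop)
    (φ : Λ → List (Fin 2 × Bool)) (hφ : ∀ l, φ l ≠ []) (s t : V) :
    (∃ w', PathLabel (ReplEdge E φ) (Sum.inl s) (Sum.inl t) w' ∧ Dyck w') ↔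
      (∃ w, PathLabel E s t w ∧ Dyck ((w.map φ).flatten)) := by
  constructor
  · rintro ⟨w', h, hd⟩
    obtain ⟨w, hp, rfl⟩ := forward hφ w'.length w' s t le_rfl h
    exact ⟨w, hp, hd⟩
  · rintro ⟨w, hp, hd⟩
    exact ⟨(w.map φ).flatten, backward hφ hp, hd⟩
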